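/- arXiv:2206.01059 — 2 statements merged into one kernel-verified Lean document; each statement's English description precedes it below -/
import Mathlib

section
/- Let G be a finite non-abelian simple group with the property that every non-identity element of G lies in a 2-element generating set. Then the commuting graph of G is not isomorphic to a strong product of two graphs each having at least two vertices. -/
/-- The commuting graph of a group. -/
def commGraph (G : Type*) [Group G] : SimpleGraph G where
  Adj x y := x ≠ y ∧ x * y = y * x
  symm := ⟨by rintro x y ⟨h1, h2⟩; exact ⟨fun h => h1 h.symm, h2.symm⟩⟩
  loopless := ⟨by rintro x ⟨h, -⟩; exact h rfl⟩

/-- The strong product of two simple graphs: distinct pairs are adjacent iff in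
each coordinate the entries are equal or adjacent. -/
def strongProd {α β : Type*} (X : SimpleGraph α) (Y : SimpleGraph β) :
    SimpleGraph (α × β) where
  Adj a b := a ≠ b ∧ (a.1 = b.1 ∨ X.Adj a.1 b.1) ∧ (a.2 = b.2 ∨ Y.Adj a.2 b.2)
  symm := ⟨by
    rintro a b ⟨h1, h2, h3⟩
    exact ⟨fun h => h1 h.symm, h2.imp Eq.symm (fun h => X.adj_symm h),
      h3.imp Eq.symm (fun h => Y.adj_symm h)⟩⟩
  loopless := ⟨by rintro a ⟨h, -⟩; exact h rfl⟩

/-- The commuting graph of a finite non-abelian simple group (in which every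
non-identity element lies in a 2-element generating set) is prime under the
strong product. -/
theorem commGraph_simple_prime (G : Type) [Group G] [Fintype G] [IsSimpleGroup G]
    (hna : ∃ a b : G, a * b ≠ b * a)
    (hgen : ∀ g : G, g ≠ 1 → ∃ h : G, Subgroup.closure {g, h} = ⊤) :
    ∀ (α β : Type) (A : SimpleGraph α) (B : SimpleGraph β),
      2 ≤ Nat.card α → 2 ≤ Nat.card β →
      ¬ Nonempty (commGraph G ≃g strongProd A B) := by
  intro α β A B hα hβ ⟨φ⟩
  -- trivial center
  have hZ : ∀ x : G, (∀ y : G, y * x = x * y) → x = 1 := by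
    intro x hx
    have hmem : x ∈ Subgroup.center G := Subgroup.mem_center_iff.mpr hx
    rcases IsSimpleGroup.eq_bot_or_eq_top_of_normal (Subgroup.center G)
      inferInstance with h | h
    · rw [h] at hmem; simpa using hmem
    · obtain ⟨a, b, hab⟩ := hna
      exact absurd ((Subgroup.mem_center_iff.mp
        (h ▸ Subgroup.mem_top a : a ∈ Subgroup.center G)) b).symm hab
  -- nontriviality of α and β
  haveI : Finite α := Nat.finite_of_card_ne_zero (by omega)
  haveI : Finite β := Nat.finite_of_card_ne_zero (by omega)
  haveI : Nontrivial α := Finite.one_lt_card_iff_nontrivial.mp (by omega)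
  haveI : Nontrivial β := Finite.one_lt_card_iff_nontrivial.mp (by omega)
  set p := φ 1 with hp
  -- universality of the image of 1
  have huniv : ∀ q : α × β, q ≠ p → (p.1 = q.1 ∨ A.Adj p.1 q.1) ∧
      (p.2 = q.2 ∨ B.Adj p.2 q.2) := by
    intro q hq
    have hg : φ.symm q ≠ 1 := by
      intro h
      exact hq (by rw [← φ.apply_symm_apply q, h, hp])
    have hadj : (commGraph G).Adj 1 (φ.symm q) :=
      ⟨fun h => hg h.symm, by rw [one_mul, mul_one]⟩
    have := φ.map_adj_iff.mpr hadj
    rw [φ.apply_symm_apply] at this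
    exact this.2
  have ha0 : ∀ a : α, p.1 = a ∨ A.Adj p.1 a := by
    intro a
    by_cases h : a = p.1
    · exact Or.inl h.symm
    · exact (huniv (a, p.2) (fun he => h (congrArg Prod.fst he))).1
  have hb0 : ∀ b : β, p.2 = b ∨ B.Adj p.2 b := by
    intro b
    by_cases h : b = p.2
    · exact Or.inl h.symm
    · exact (huniv (p.1, b) (fun he => h (congrArg Prod.snd he))).2
  -- pick a1 ≠ p.1
  obtain ⟨a1, ha1⟩ := exists_ne p.1
  have hAa1 : A.Adj a1 p.1 := ((ha0 a1).resolve_left (fun h => ha1 h.symm)).symm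
  set g1 := φ.symm (a1, p.2) with hg1def
  have hφg1 : φ g1 = (a1, p.2) := φ.apply_symm_apply _
  have hg1ne : g1 ≠ 1 := by
    intro h
    apply ha1
    have : φ g1 = p := by rw [h, hp]
    rw [hφg1] at this
    exact (congrArg Prod.fst this)
  obtain ⟨h, hh⟩ := hgen g1 hg1ne
  -- anything commuting with both g1 and h is 1
  have hkey : ∀ x : G, g1 * x = x * g1 → h * x = x * h → x = 1 := by
    intro x hx1 hx2
    have hle : Subgroup.closure {g1, h} ≤ Subgroup.centralizer {x} := by
      rw [Subgroup.closure_le]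
      rintro y (rfl | rfl)
      · exact Subgroup.mem_centralizer_iff.mpr (by rintro s rfl; exact hx1.symm)
      · exact Subgroup.mem_centralizer_iff.mpr (by rintro s rfl; exact hx2.symm)
    rw [hh] at hle
    refine hZ x (fun y => ?_)
    have := Subgroup.mem_centralizer_iff.mp (hle (Subgroup.mem_top y))
    exact (this x rfl).symm
  set c := (φ h).1 with hc
  set d := (φ h).2 with hd
  -- pick b1 ≠ p.2 with d = b1 ∨ B.Adj d b1
  obtain ⟨b1, hb1ne, hb1adj⟩ : ∃ b1 : β, b1 ≠ p.2 ∧ (d = b1 ∨ B.Adj d b1) := by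
    rcases eq_or_ne d p.2 with hdp | hdp
    · obtain ⟨b1, hb1⟩ := exists_ne p.2
      exact ⟨b1, hb1, Or.inr (hdp ▸ (hb0 b1).resolve_left (fun h => hb1 h.symm))⟩
    · exact ⟨d, hdp, Or.inl rfl⟩
  set y := φ.symm (p.1, b1) with hydef
  have hφy : φ y = (p.1, b1) := φ.apply_symm_apply _
  have hyne : y ≠ 1 := by
    intro h
    apply hb1ne
    have : φ y = p := by rw [h, hp]
    rw [hφy] at this
    exact (congrArg Prod.snd this)
  -- y commutes with g1
  have hcomm1 : g1 * y = y * g1 := by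
    by_cases hyg : y = g1
    · rw [hyg]
    · have hadj : (strongProd A B).Adj (φ g1) (φ y) := by
        rw [hφg1, hφy]
        refine ⟨fun he => ha1 (congrArg Prod.fst he), Or.inr hAa1, ?_⟩
        exact (hb0 b1).imp id id
      exact (φ.map_adj_iff.mp hadj).2
  -- y commutes with h
  have hcomm2 : h * y = y * h := by
    by_cases hyh : y = h
    · rw [hyh]
    · have hadj : (strongProd A B).Adj (φ h) (φ y) := by
        rw [hφy]
        refine ⟨fun he => hyh (φ.injective (by rw [hφy, ← he])), ?_, hb1adj⟩
        rcases ha0 c with h1 | h1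
        · exact Or.inl h1.symm
        · exact Or.inr h1.symm
      exact (φ.map_adj_iff.mp hadj).2
  exact hyne (hkey y hcomm1 hcomm2)
end

section
/- Let G₁ and G₂ be finite isoclinic groups with |Z(G₁)| = |Z(G₂)|. Then the commuting graphs of G₁ and G₂ are isomorphic. -/
open scoped commutatorElement

/-- Commutation only depends on cosets modulo the center. -/
lemma comm_congr {G : Type*} [Group G] {x x' y y' : G}
    (hx : (QuotientGroup.mk x : G ⧸ Subgroup.center G) = QuotientGroup.mk x')
    (hy : (QuotientGroup.mk y : G ⧸ Subgroup.center G) = QuotientGroup.mk y') :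
    (x * y = y * x) ↔ (x' * y' = y' * x') := by
  rw [QuotientGroup.eq] at hx hy
  have hzc := Subgroup.mem_center_iff.mp hx
  have hwc := Subgroup.mem_center_iff.mp hy
  set z := x⁻¹ * x' with hz
  set w := y⁻¹ * y' with hw
  have hx' : x' = x * z := by rw [hz]; group
  have hy' : y' = y * w := by rw [hw]; group
  have h1 : x' * y' = x * y * (z * w) := by
    rw [hx', hy', mul_assoc x z (y * w), ← mul_assoc z y w, ← hzc y,
      mul_assoc y z w, ← mul_assoc x y (z * w)]
  have h2 : y' * x' = y * x * (z * w) := by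
    rw [hx', hy', mul_assoc y w (x * z), ← mul_assoc w x z, ← hwc x,
      mul_assoc x w z, hzc w, ← mul_assoc y x (z * w)]
  rw [h1, h2, mul_left_inj]

/-- The induced graph on the central quotient. -/
def qGraph (G : Type*) [Group G] : SimpleGraph (G ⧸ Subgroup.center G) where
  Adj a b := a ≠ b ∧ ∃ x y : G,
    QuotientGroup.mk x = a ∧ QuotientGroup.mk y = b ∧ x * y = y * x
  symm := ⟨by
    rintro a b ⟨h, x, y, hx, hy, hc⟩
    exact ⟨h.symm, y, x, hy, hx, hc.symm⟩⟩
  loopless := ⟨by rintro a ⟨h, -⟩; exact h rfl⟩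

lemma qGraph_adj_iff {G : Type*} [Group G] (x y : G) :
    (qGraph G).Adj (QuotientGroup.mk x) (QuotientGroup.mk y) ↔
      (QuotientGroup.mk x : G ⧸ Subgroup.center G) ≠ QuotientGroup.mk y ∧
        x * y = y * x := by
  constructor
  · rintro ⟨h, x', y', hx, hy, hc⟩
    exact ⟨h, (comm_congr hx.symm hy.symm).mpr hc⟩
  · rintro ⟨h, hc⟩
    exact ⟨h, x, y, rfl, rfl, hc⟩

/-- The decomposition of a group as quotient-by-center times center. -/
noncomputable def centerEquiv (G : Type*) [Group G] :
    G ≃ (G ⧸ Subgroup.center G) × Subgroup.center G where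
  toFun x := ⟨QuotientGroup.mk x,
    ⟨(Quotient.out (QuotientGroup.mk x : G ⧸ Subgroup.center G))⁻¹ * x, by
      rw [← QuotientGroup.eq, QuotientGroup.out_eq']⟩⟩
  invFun p := Quotient.out p.1 * p.2
  left_inv x := by simp
  right_inv p := by
    have h1 : (QuotientGroup.mk (Quotient.out p.1 * (p.2 : G)) :
        G ⧸ Subgroup.center G) = p.1 := by
      rw [QuotientGroup.mk_mul, QuotientGroup.out_eq',
        (QuotientGroup.eq_one_iff (p.2 : G)).mpr p.2.2, mul_one]
    ext
    · exact h1
    · simp only [h1]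
      simp

/-- The commuting graph decomposes as a strong product. -/
noncomputable def commGraphIsoStrongProd (G : Type*) [Group G] :
    commGraph G ≃g strongProd (qGraph G) (⊤ : SimpleGraph (Subgroup.center G)) where
  toEquiv := centerEquiv G
  map_rel_iff' := by
    intro x y
    show (strongProd _ _).Adj (centerEquiv G x) (centerEquiv G y) ↔ (commGraph G).Adj x y
    constructor
    · rintro ⟨hne, h1, -⟩
      refine ⟨fun h => hne (by rw [h]), ?_⟩
      rcases h1 with h1 | h1
      · exact (comm_congr h1 (rfl : (QuotientGroup.mk y : G ⧸ Subgroup.center G)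
          = QuotientGroup.mk y)).mpr rfl
      · exact ((qGraph_adj_iff x y).mp h1).2
    · rintro ⟨hne, hc⟩
      refine ⟨fun h => hne ((centerEquiv G).injective h), ?_, eq_or_ne _ _⟩
      rcases eq_or_ne (QuotientGroup.mk x : G ⧸ Subgroup.center G)
        (QuotientGroup.mk y) with h | h
      · exact Or.inl h
      · exact Or.inr ((qGraph_adj_iff x y).mpr ⟨h, hc⟩)

/-- Strong products of isomorphic graphs are isomorphic. -/
def strongProdCongr {α₁ β₁ α₂ β₂ : Type*} {X₁ : SimpleGraph α₁} {Y₁ : SimpleGraph β₁}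
    {X₂ : SimpleGraph α₂} {Y₂ : SimpleGraph β₂} (f : X₁ ≃g X₂) (g : Y₁ ≃g Y₂) :
    strongProd X₁ Y₁ ≃g strongProd X₂ Y₂ where
  toEquiv := Equiv.prodCongr f.toEquiv g.toEquiv
  map_rel_iff' := by
    rintro ⟨a1, b1⟩ ⟨a2, b2⟩
    show (_ ∧ _ ∧ _) ↔ (_ ∧ _ ∧ _)
    constructor
    · rintro ⟨h1, h2, h3⟩
      refine ⟨fun h => h1 (by rw [h]), ?_, ?_⟩
      · exact h2.imp (fun h => f.toEquiv.injective h) (fun h => f.map_rel_iff.mp h)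
      · exact h3.imp (fun h => g.toEquiv.injective h) (fun h => g.map_rel_iff.mp h)
    · rintro ⟨h1, h2, h3⟩
      refine ⟨fun h => h1 (Prod.ext_iff.mpr
          ⟨f.toEquiv.injective (congrArg Prod.fst h), g.toEquiv.injective (congrArg Prod.snd h)⟩),
        ?_, ?_⟩
      · exact h2.imp (fun h => congrArg f.toEquiv h) (fun h => f.map_rel_iff.mpr h)
      · exact h3.imp (fun h => congrArg g.toEquiv h) (fun h => g.map_rel_iff.mpr h)

/-- Complete graphs on equivalent types are isomorphic. -/
def topCongr {α β : Type*} (e : α ≃ β) :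
    (⊤ : SimpleGraph α) ≃g (⊤ : SimpleGraph β) where
  toEquiv := e
  map_rel_iff' := by
    intro a b
    show e a ≠ e b ↔ a ≠ b
    simp [e.injective.eq_iff]

/-- Finite isoclinic groups with centers of equal order have isomorphic
commuting graphs. -/
theorem isoclinic_commGraph_iso
    (G₁ G₂ : Type*) [Group G₁] [Group G₂] [Finite G₁] [Finite G₂]
    (hZ : Nat.card (Subgroup.center G₁) = Nat.card (Subgroup.center G₂))
    (hiso : ∃ (φ : (G₁ ⧸ Subgroup.center G₁) ≃* (G₂ ⧸ Subgroup.center G₂))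
      (ψ : (commutator G₁) ≃* (commutator G₂)),
      ∀ (x y : G₁) (x' y' : G₂),
        φ (QuotientGroup.mk x) = QuotientGroup.mk x' →
        φ (QuotientGroup.mk y) = QuotientGroup.mk y' →
        (ψ ⟨⁅x, y⁆, Subgroup.commutator_mem_commutator (Subgroup.mem_top x)
            (Subgroup.mem_top y)⟩ : G₂) = ⁅x', y'⁆) :
    Nonempty (commGraph G₁ ≃g commGraph G₂) := by
  obtain ⟨φ, ψ, hcompat⟩ := hiso
  obtain ⟨eZ⟩ := Finite.card_eq.mp hZ
  have key : ∀ x y : G₁, x * y = y * x ↔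
      Quotient.out (φ (QuotientGroup.mk x)) * Quotient.out (φ (QuotientGroup.mk y)) =
      Quotient.out (φ (QuotientGroup.mk y)) * Quotient.out (φ (QuotientGroup.mk x)) := by
    intro x y
    set x' := Quotient.out (φ (QuotientGroup.mk x))
    set y' := Quotient.out (φ (QuotientGroup.mk y))
    have hx' : φ (QuotientGroup.mk x) = QuotientGroup.mk x' := (QuotientGroup.out_eq' _).symm
    have hy' : φ (QuotientGroup.mk y) = QuotientGroup.mk y' := (QuotientGroup.out_eq' _).symm
    have := hcompat x y x' y' hx' hy'
    constructor
    · intro h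
      have h1 : (⟨⁅x, y⁆, Subgroup.commutator_mem_commutator (Subgroup.mem_top x)
          (Subgroup.mem_top y)⟩ : commutator G₁) = 1 := by
        ext
        exact commutatorElement_eq_one_iff_commute.mpr h
      rw [h1, map_one] at this
      have h2 : ⁅x', y'⁆ = 1 := by rw [← this]; simp
      exact (commutatorElement_eq_one_iff_commute.mp h2).eq
    · intro h
      have h2 : ⁅x', y'⁆ = 1 := commutatorElement_eq_one_iff_commute.mpr h
      rw [h2] at this
      have h3 : (⟨⁅x, y⁆, Subgroup.commutator_mem_commutator (Subgroup.mem_top x)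
          (Subgroup.mem_top y)⟩ : commutator G₁) = 1 := by
        apply ψ.injective
        rw [map_one]
        exact Subtype.ext this
      exact commutatorElement_eq_one_iff_commute.mp (congrArg Subtype.val h3)
  have fq : qGraph G₁ ≃g qGraph G₂ := by
    refine ⟨φ.toEquiv, ?_⟩
    intro a b
    obtain ⟨x, rfl⟩ := QuotientGroup.mk_surjective a
    obtain ⟨y, rfl⟩ := QuotientGroup.mk_surjective b
    show (qGraph G₂).Adj (φ (QuotientGroup.mk x)) (φ (QuotientGroup.mk y)) ↔ _
    rw [← QuotientGroup.out_eq' (φ (QuotientGroup.mk x)),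
        ← QuotientGroup.out_eq' (φ (QuotientGroup.mk y)),
        qGraph_adj_iff, qGraph_adj_iff]
    rw [QuotientGroup.out_eq', QuotientGroup.out_eq', φ.injective.ne_iff.symm.symm]
    constructor
    · rintro ⟨h1, h2⟩
      exact ⟨h1, (key x y).mpr h2⟩
    · rintro ⟨h1, h2⟩
      exact ⟨h1, (key x y).mp h2⟩
  exact ⟨((commGraphIsoStrongProd G₁).trans (strongProdCongr fq (topCongr eZ))).trans
    (commGraphIsoStrongProd G₂).symm⟩
end
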